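/- MEB of a symmetric simplex configuration: Let T > t ≥ 1 and α ≥ β ≥ 0. Consider the t points in ℝ^T given by v_i = α e_i + β ∑_{j∈[t], j≠i} e_j for i = 1,…,t, where e_1,…,e_t are distinct standard unit vectors. Then the point x* = ((α + (t-1)β)/t)·∑_{i=1}^t e_i is a center of the minimum enclosing ball of {v_1,…,v_t}, and the minimum over all x ∈ ℝ^T of max_i ‖x - v_i‖² equals (α - β)²·(1 - 1/t). -/

import Mathlib

open Finset

open scoped RealInnerProductSpace

/-- Minimum enclosing ball of the symmetric simplex configuration
v_i = α e_i + β ∑_{j≠i} e_j : the symmetric point is a center and the optimal squared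
radius is (α-β)²(1-1/t). -/
theorem meb_symmetric_simplex (t T : ℕ) (ht : 0 < t) (hT : t < T) (α β : ℝ)
    (hβ : 0 ≤ β) (hαβ : β ≤ α) (e : Fin t → Fin T) (he : Function.Injective e)
    (v : Fin t → EuclideanSpace ℝ (Fin T))
    (hv : ∀ i, v i = α • EuclideanSpace.single (e i) (1 : ℝ) +
      β • ∑ j ∈ Finset.univ.erase i, EuclideanSpace.single (e j) (1 : ℝ))
    (xstar : EuclideanSpace ℝ (Fin T))
    (hx : xstar = ((α + ((t : ℝ) - 1) * β) / t) •
      ∑ i, EuclideanSpace.single (e i) (1 : ℝ)) :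
    (Finset.univ.sup' ⟨⟨0, ht⟩, Finset.mem_univ _⟩ fun i => ‖xstar - v i‖ ^ 2) =
        (α - β) ^ 2 * (1 - 1 / t) ∧
    ∀ x : EuclideanSpace ℝ (Fin T),
      (α - β) ^ 2 * (1 - 1 / t) ≤
        Finset.univ.sup' ⟨⟨0, ht⟩, Finset.mem_univ _⟩ fun i => ‖x - v i‖ ^ 2 := by
  have htR : (0 : ℝ) < t := by exact_mod_cast ht
  have htR' : (t : ℝ) ≠ 0 := ne_of_gt htR
  set s : Fin t → EuclideanSpace ℝ (Fin T) :=
    fun i => EuclideanSpace.single (e i) (1 : ℝ) with hs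
  set u : EuclideanSpace ℝ (Fin T) := ∑ i, s i with hu
  set c : ℝ := (α + ((t : ℝ) - 1) * β) / t with hc
  have hss : ∀ i j, ⟪s i, s j⟫ = if i = j then (1 : ℝ) else 0 := by
    intro i j
    rw [hs]
    simp only [EuclideanSpace.inner_single_left, EuclideanSpace.single_apply, map_one, one_mul]
    by_cases h : i = j
    · simp [h]
    · rw [if_neg (fun h' => h (he h')), if_neg h]
  have hus : ∀ i, ⟪u, s i⟫ = (1 : ℝ) := by
    intro i
    rw [hu, sum_inner]
    simp [hss]
  have huu : ⟪u, u⟫ = (t : ℝ) := by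
    rw [hu, inner_sum]
    simp [hus, ← hu]
  have hnu : ‖u‖ ^ 2 = (t : ℝ) := by rw [← real_inner_self_eq_norm_sq, huu]
  have hns : ∀ i, ‖s i‖ ^ 2 = 1 := by
    intro i; rw [← real_inner_self_eq_norm_sq, hss]; simp
  have hv' : ∀ i, v i = (α - β) • s i + β • u := by
    intro i
    rw [hv i]
    have h2 : ∑ j ∈ Finset.univ.erase i, s j = u - s i := by
      rw [hu, Finset.sum_erase_eq_sub (mem_univ i)]
    show α • s i + β • ∑ j ∈ Finset.univ.erase i, s j = (α - β) • s i + β • u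
    rw [h2, smul_sub, sub_smul]
    abel
  have hxs : ∀ i, xstar - v i = (c - β) • u - (α - β) • s i := by
    intro i
    rw [hv' i, hx]
    show c • u - ((α - β) • s i + β • u) = (c - β) • u - (α - β) • s i
    module
  have hcb : c - β = (α - β) / t := by
    rw [hc]; field_simp; ring
  have key : ∀ i, ‖xstar - v i‖ ^ 2 = (α - β) ^ 2 * (1 - 1 / t) := by
    intro i
    rw [hxs i, norm_sub_sq_real, norm_smul, norm_smul, real_inner_smul_left,
      real_inner_smul_right, hus i, mul_pow, mul_pow, hnu, hns i, hcb]
    simp only [Real.norm_eq_abs, sq_abs]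
    field_simp
    ring
  have hsv : ∑ i, v i = (α - β + (t : ℝ) * β) • u := by
    simp_rw [hv']
    rw [Finset.sum_add_distrib, ← Finset.smul_sum, ← hu, Finset.sum_const, card_univ,
      Fintype.card_fin, add_smul, mul_smul]
    rw [Nat.cast_smul_eq_nsmul ℝ t (β • u)]
  have hsum0 : ∑ i, (xstar - v i) = 0 := by
    rw [Finset.sum_sub_distrib, hsv, Finset.sum_const, card_univ, Fintype.card_fin,
      ← Nat.cast_smul_eq_nsmul ℝ t xstar, hx, smul_smul, ← sub_smul]
    have hz : (t : ℝ) * c - (α - β + (t : ℝ) * β) = 0 := by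
      rw [hc]; field_simp; ring
    rw [hz, zero_smul]
  constructor
  · have : (fun i => ‖xstar - v i‖ ^ 2) = fun _ : Fin t => (α - β) ^ 2 * (1 - 1 / t) :=
      funext key
    rw [this]; exact Finset.sup'_const _ _
  · intro x
    set M := Finset.univ.sup' ⟨⟨0, ht⟩, Finset.mem_univ _⟩ (fun i => ‖x - v i‖ ^ 2) with hM
    have hsum_le : ∑ i, ‖x - v i‖ ^ 2 ≤ (t : ℝ) * M := by
      calc ∑ i, ‖x - v i‖ ^ 2 ≤ ∑ _i : Fin t, M :=
            Finset.sum_le_sum fun i _ =>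
              Finset.le_sup' (f := fun i => ‖x - v i‖ ^ 2) (b := i) (mem_univ i)
        _ = (t : ℝ) * M := by simp [mul_comm]
    have hsum_ge : (t : ℝ) * ((α - β) ^ 2 * (1 - 1 / t)) ≤ ∑ i, ‖x - v i‖ ^ 2 := by
      have expand : ∀ i, ‖x - v i‖ ^ 2 =
          ‖x - xstar‖ ^ 2 + 2 * ⟪x - xstar, xstar - v i⟫ + ‖xstar - v i‖ ^ 2 := by
        intro i
        rw [show x - v i = (x - xstar) + (xstar - v i) by abel, norm_add_sq_real]
      calc (t : ℝ) * ((α - β) ^ 2 * (1 - 1 / t))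
          ≤ (t : ℝ) * ‖x - xstar‖ ^ 2 + (t : ℝ) * ((α - β) ^ 2 * (1 - 1 / t)) := by
            nlinarith [sq_nonneg ‖x - xstar‖, htR]
        _ = ∑ i, ‖x - v i‖ ^ 2 := by
            simp_rw [expand]
            rw [Finset.sum_add_distrib, Finset.sum_add_distrib, ← Finset.mul_sum,
              ← inner_sum, hsum0, inner_zero_right, mul_zero, add_zero,
              Finset.sum_const, card_univ, Fintype.card_fin]
            simp_rw [key]
            rw [Finset.sum_const, card_univ, Fintype.card_fin]
            simp only [nsmul_eq_mul]
            try push_cast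
            try ring
    have hfin := hsum_ge.trans hsum_le
    exact le_of_mul_le_mul_left hfin htR
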